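/- Fix reals a > 0, b > 0, w0 > 0, λ > 0 and μ ∈ [0, 1]. Set k = w0/(2·λ·ln 2), A = 1/a, B = 1/b, D = (B − A − k)² + 4·k·μ·(B − A), and assume D ≥ 0; set ν = (1/2)·√D − (1/2)·(A + B − k) and assume ν ≥ 0. Then the function g(p) = (w0/2)·(μ·log2(1 + a·p) + (1 − μ)·log2(1 + b·p)) − λ·p satisfies g'(ν) = 0 and attains its global maximum over [0, ∞) at p = ν. -/

import Mathlib

set_option maxHeartbeats 1600000 in
/-- `ν` is the root of the marginal utility of the common-message power in the
μ-averaged problem (P3): the Lagrangian term `g` has derivative zero at `ν`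
and attains its global maximum over `[0,∞)` there. -/
theorem nu_global_max (a b w0 lam μ : ℝ) (ha : 0 < a) (hb : 0 < b)
    (hw0 : 0 < w0) (hlam : 0 < lam) (hμ0 : 0 ≤ μ) (hμ1 : μ ≤ 1) :
    let k : ℝ := w0 / (2 * lam * Real.log 2)
    let A : ℝ := 1 / a
    let B : ℝ := 1 / b
    let D : ℝ := (B - A - k) ^ 2 + 4 * k * μ * (B - A)
    let ν : ℝ := (1 / 2) * Real.sqrt D - (1 / 2) * (A + B - k)
    let g : ℝ → ℝ := fun p =>
      (w0 / 2) * (μ * Real.logb 2 (1 + a * p) + (1 - μ) * Real.logb 2 (1 + b * p)) -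
        lam * p
    0 ≤ D → 0 ≤ ν → (deriv g ν = 0 ∧ ∀ p : ℝ, 0 ≤ p → g p ≤ g ν) := by
  intro k A B D ν g hD hν
  have hk : k = w0 / (2 * lam * Real.log 2) := rfl
  have hA : A = 1 / a := rfl
  have hB : B = 1 / b := rfl
  have hDe : D = (B - A - k) ^ 2 + 4 * k * μ * (B - A) := rfl
  have hνe : ν = (1 / 2) * Real.sqrt D - (1 / 2) * (A + B - k) := rfl
  have hge : g = fun p =>
      (w0 / 2) * (μ * Real.logb 2 (1 + a * p) + (1 - μ) * Real.logb 2 (1 + b * p)) -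
        lam * p := rfl
  clear_value k A B D ν g
  have hL : 0 < Real.log 2 := Real.log_pos one_lt_two
  have ha' := ha.ne'
  have hb' := hb.ne'
  have hL' := hL.ne'
  have hlam' := hlam.ne'
  have hs : Real.sqrt D ^ 2 = D := Real.sq_sqrt hD
  have h1 : 2 * ν + (A + B - k) = Real.sqrt D := by linear_combination 2 * hνe
  have hroot : (2 * ν + (A + B - k)) ^ 2 = (B - A - k) ^ 2 + 4 * k * μ * (B - A) := by
    rw [h1, hs, hDe]
  subst hA hB
  have e1 : 2*ν*(a*b) + (b + a - a*b*k) = a*b*(2*ν + (1/a + 1/b - k)) := by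
    field_simp; try ring
  have e2 : (a - b - a*b*k)^2 + 4*k*μ*(a-b)*(a*b)
      = (a*b)^2 * ((1/b - 1/a - k)^2 + 4*k*μ*(1/b - 1/a)) := by
    field_simp; try ring
  have hroot2 : (2*ν*(a*b) + (b + a - a*b*k))^2
      = (a - b - a*b*k)^2 + 4*k*μ*(a-b)*(a*b) := by
    rw [e1, e2, mul_pow, hroot]
  -- key identity
  have key4 : (4*a*b) * (k * (μ*a*(1 + b*ν) + (1-μ)*b*(1 + a*ν)))
      = (4*a*b) * ((1 + a*ν)*(1 + b*ν)) := by
    linear_combination (-1 : ℝ) * hroot2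
  have key : k * (μ*a*(1 + b*ν) + (1-μ)*b*(1 + a*ν)) = (1 + a*ν)*(1 + b*ν) :=
    mul_left_cancel₀ (by positivity) key4
  -- the derivative function
  set E : ℝ → ℝ := fun p =>
    w0/2 * (μ * (a/(1+a*p)/Real.log 2) + (1-μ) * (b/(1+b*p)/Real.log 2)) - lam with hE
  have hg : ∀ p : ℝ, 0 ≤ p → HasDerivAt g (E p) p := by
    intro p hp
    have h1 : 0 < 1 + a*p := by positivity
    have h2 : 0 < 1 + b*p := by positivity
    have d1 : HasDerivAt (fun q : ℝ => 1 + a*q) a p := by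
      simpa using ((hasDerivAt_id p).const_mul a).const_add 1
    have d2 : HasDerivAt (fun q : ℝ => 1 + b*q) b p := by
      simpa using ((hasDerivAt_id p).const_mul b).const_add 1
    have l1 : HasDerivAt (fun q : ℝ => Real.log (1 + a*q)) (a / (1+a*p)) p := d1.log h1.ne'
    have l2 : HasDerivAt (fun q : ℝ => Real.log (1 + b*q)) (b / (1+b*p)) p := d2.log h2.ne'
    have hgdef : g = fun q => (w0 / 2) * (μ * (Real.log (1 + a * q) / Real.log 2)
        + (1 - μ) * (Real.log (1 + b * q) / Real.log 2)) - lam * q := by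
      rw [hge]; funext q; simp [Real.logb]
    rw [hgdef]
    have H := ((((l1.div_const (Real.log 2)).const_mul μ).add
        ((l2.div_const (Real.log 2)).const_mul (1-μ))).const_mul (w0/2)).sub
        ((hasDerivAt_id p).const_mul lam)
    refine H.congr_deriv ?_
    simp only [hE, id_eq]
    ring
  have h1ν : 0 < 1 + a*ν := by positivity
  have h2ν : 0 < 1 + b*ν := by positivity
  have hEν : E ν = 0 := by
    rw [hE]
    simp only
    rw [hk] at key
    field_simp at key ⊢
    linear_combination key
  have hE_mono : ∀ x y : ℝ, 0 ≤ x → x ≤ y → E y ≤ E x := by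
    intro x y hx hxy
    have h1x : 0 < 1 + a*x := by positivity
    have h2x : 0 < 1 + b*x := by positivity
    have h1y : 0 < 1 + a*y := by nlinarith
    have h2y : 0 < 1 + b*y := by nlinarith
    have t1 : a/(1+a*y) ≤ a/(1+a*x) := by gcongr <;> nlinarith
    have t2 : b/(1+b*y) ≤ b/(1+b*x) := by gcongr <;> nlinarith
    have hsum : μ * (a/(1+a*y)/Real.log 2) + (1-μ)*(b/(1+b*y)/Real.log 2)
        ≤ μ * (a/(1+a*x)/Real.log 2) + (1-μ)*(b/(1+b*x)/Real.log 2) := by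
      apply add_le_add
      · exact mul_le_mul_of_nonneg_left ((div_le_div_iff_of_pos_right hL).mpr t1) hμ0
      · exact mul_le_mul_of_nonneg_left ((div_le_div_iff_of_pos_right hL).mpr t2) (by linarith)
    rw [hE]
    simp only
    have := mul_le_mul_of_nonneg_left hsum (by positivity : (0:ℝ) ≤ w0/2)
    linarith
  have hderivν : deriv g ν = 0 := by rw [(hg ν hν).deriv, hEν]
  refine ⟨hderivν, ?_⟩
  have hmono : MonotoneOn g (Set.Icc 0 ν) := by
    apply monotoneOn_of_deriv_nonneg (convex_Icc 0 ν)
    · exact fun x hx => ((hg x hx.1).differentiableAt.continuousAt).continuousWithinAt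
    · intro x hx
      rw [interior_Icc] at hx
      exact ((hg x hx.1.le).differentiableAt).differentiableWithinAt
    · intro x hx
      rw [interior_Icc] at hx
      rw [(hg x hx.1.le).deriv]
      have := hE_mono x ν hx.1.le hx.2.le
      linarith [hEν]
  have hanti : AntitoneOn g (Set.Ici ν) := by
    apply antitoneOn_of_deriv_nonpos (convex_Ici ν)
    · exact fun x hx => ((hg x (le_trans hν hx)).differentiableAt.continuousAt).continuousWithinAt
    · intro x hx
      rw [interior_Ici] at hx
      exact ((hg x (le_trans hν hx.le)).differentiableAt).differentiableWithinAt
    · intro x hx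
      rw [interior_Ici] at hx
      rw [(hg x (le_trans hν hx.le)).deriv]
      have := hE_mono ν x hν hx.le
      linarith [hEν]
  intro p hp
  rcases le_total p ν with h | h
  · exact hmono ⟨hp, h⟩ ⟨hν, le_rfl⟩ h
  · exact hanti (Set.self_mem_Ici) h h
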